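/- Let A and B be groups, n ≥ 2, and let G_n = A(n)B be their n-th nilpotent product. Then the subgroup C_A(B)·C_B(A) of G_n intersects the Cartesian subgroup [A,B] (the image in G_n of the kernel of A ∗ B → A × B) trivially: C_A(B)C_B(A) ∩ [A,B] = 1. -/

import Mathlib

open Monoid

section NilpotentProduct

variable (A B : Type*) [Group A] [Group B] (n : ℕ)

/-- The Cartesian subgroup `[A,B]` of the free product `A ∗ B`: the kernel of the
natural homomorphism `A ∗ B →* A × B`. -/
def cartesianSubgroup : Subgroup (Coprod A B) := MonoidHom.ker (Coprod.toProd)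

/-- The normal subgroup `[A,B] ∩ γ_{n+1}(A ∗ B)` defining the `n`-th nilpotent product.
(Here `lowerCentralSeries H n = γ_{n+1}(H)` since Mathlib's indexing starts at `0`.) -/
def nilProdKer : Subgroup (Coprod A B) :=
  cartesianSubgroup A B ⊓ (⊤ : Subgroup (Coprod A B)).lowerCentralSeries n

instance : (nilProdKer A B n).Normal := by
  have h1 : (cartesianSubgroup A B).Normal := MonoidHom.normal_ker _
  have h2 : ((⊤ : Subgroup (Coprod A B)).lowerCentralSeries n).Normal := inferInstance
  exact Subgroup.normal_inf_normal _ _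

/-- The `n`-th nilpotent product `A(n)B = (A ∗ B) / ([A,B] ∩ γ_{n+1}(A ∗ B))`. -/
abbrev NilProd := Coprod A B ⧸ nilProdKer A B n

/-- The canonical embedding of `A` into `A(n)B`. -/
def nilProdInl : A →* NilProd A B n := (QuotientGroup.mk' _).comp Coprod.inl

/-- The canonical embedding of `B` into `A(n)B`. -/
def nilProdInr : B →* NilProd A B n := (QuotientGroup.mk' _).comp Coprod.inr

/-- `C_A(B)`: the centralizer of `B` in `A`, as a subgroup of `A(n)B`. -/
def CAB : Subgroup (NilProd A B n) :=
  (nilProdInl A B n).range ⊓ Subgroup.centralizer (Set.range (nilProdInr A B n))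

/-- `C_B(A)`: the centralizer of `A` in `B`, as a subgroup of `A(n)B`. -/
def CBA : Subgroup (NilProd A B n) :=
  (nilProdInr A B n).range ⊓ Subgroup.centralizer (Set.range (nilProdInl A B n))

end NilpotentProduct

/-- Lemma 1(iii): `C_A(B)·C_B(A) ∩ [A,B] = 1` inside `G_n = A(n)B`, where `[A,B]`
denotes the image in `G_n` of the Cartesian subgroup of `A ∗ B`. -/
theorem centralizers_inf_cartesian (A B : Type*) [Group A] [Group B] (n : ℕ) (hn : 2 ≤ n) :
    (CAB A B n ⊔ CBA A B n) ⊓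
      (cartesianSubgroup A B).map (QuotientGroup.mk' (nilProdKer A B n)) = ⊥ := by
  -- The projection `A ∗ B → A × B` descends to the nilpotent product.
  have hker : ∀ x ∈ nilProdKer A B n, Coprod.toProd x = (1 : A × B) := fun x hx => hx.1
  let φ : NilProd A B n →* A × B :=
    QuotientGroup.lift (nilProdKer A B n) Coprod.toProd hker
  -- images of `A` and `B` under φ
  have hφl : ∀ a : A, φ (nilProdInl A B n a) = (a, 1) := fun a => by
    change Coprod.toProd (Coprod.inl a) = _
    simp
  have hφr : ∀ b : B, φ (nilProdInr A B n b) = (1, b) := fun b => by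
    change Coprod.toProd (Coprod.inr b) = _
    simp
  -- elements of CAB and CBA commute
  have hcomm : ∀ x ∈ CAB A B n, ∀ y ∈ CBA A B n, x * y = y * x := by
    rintro x ⟨⟨a, rfl⟩, hx2⟩ y ⟨⟨b, rfl⟩, hy2⟩
    exact (hx2 _ ⟨b, rfl⟩).symm
  -- every element of the join is a product of one element of each
  have hdecomp : ∀ x ∈ CAB A B n ⊔ CBA A B n,
      ∃ a ∈ CAB A B n, ∃ b ∈ CBA A B n, a * b = x := by
    intro x hx
    rw [Subgroup.sup_eq_closure] at hx
    refine Subgroup.closure_induction ?_ ?_ ?_ ?_ hx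
    · rintro y (h | h)
      · exact ⟨y, h, 1, one_mem _, by simp⟩
      · exact ⟨1, one_mem _, y, h, by simp⟩
    · exact ⟨1, one_mem _, 1, one_mem _, by simp⟩
    · rintro _ _ _ _ ⟨a₁, ha₁, b₁, hb₁, rfl⟩ ⟨a₂, ha₂, b₂, hb₂, rfl⟩
      refine ⟨a₁ * a₂, mul_mem ha₁ ha₂, b₁ * b₂, mul_mem hb₁ hb₂, ?_⟩
      have := hcomm a₂ ha₂ b₁ hb₁
      simp only [mul_assoc]
      rw [← mul_assoc a₂ b₁, this, mul_assoc]
    · rintro _ _ ⟨a, ha, b, hb, rfl⟩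
      refine ⟨a⁻¹, inv_mem ha, b⁻¹, inv_mem hb, ?_⟩
      rw [hcomm a⁻¹ (inv_mem ha) b⁻¹ (inv_mem hb), mul_inv_rev]
  rw [eq_bot_iff]
  rintro x ⟨hx1, hx2⟩
  -- φ kills the image of the Cartesian subgroup
  have hφx : φ x = 1 := by
    obtain ⟨c, hc, rfl⟩ := hx2
    change Coprod.toProd c = 1
    exact hc
  obtain ⟨a, ha, b, hb, rfl⟩ := hdecomp x hx1
  obtain ⟨⟨a₀, rfl⟩, -⟩ := ha
  obtain ⟨⟨b₀, rfl⟩, -⟩ := hb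
  have : ((a₀, 1) : A × B) * (1, b₀) = 1 := by
    rw [← hφl a₀, ← hφr b₀, ← map_mul]; exact hφx
  simp only [Prod.mk_mul_mk, mul_one, one_mul, Prod.mk_eq_one] at this
  simp [this.1, this.2, Subgroup.mem_bot]
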